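/- Let η ∈ (0,1), set c = 8/η, ε = (1 − 1/e)·η/8, and β = 1 − e^{−(1−ε)²}. Then (1 − 2/(c·(1−ε)²)) / (1/α + 2/β) ≥ α·(e−1)/(e − 1 + 2·e·α) − η, where α ≥ 1 is a fixed real (in the application α = 2). -/

import Mathlib

set_option maxHeartbeats 1000000 in
theorem stmt_10 (η α : ℝ) (hη0 : 0 < η) (hη1 : η < 1) (hα : 1 ≤ α)
    (c ε β : ℝ) (hc : c = 8 / η)
    (hε : ε = (1 - 1 / Real.exp 1) * η / 8)
    (hβ : β = 1 - Real.exp (-(1 - ε) ^ 2)) :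
    (1 - 2 / (c * (1 - ε) ^ 2)) / (1 / α + 2 / β) ≥
      α * (Real.exp 1 - 1) / (Real.exp 1 - 1 + 2 * Real.exp 1 * α) - η := by
  have hE1 : (2.7182818283:ℝ) < Real.exp 1 := Real.exp_one_gt_d9
  have hE2 : Real.exp 1 < 2.7182818286 := Real.exp_one_lt_d9
  set E := Real.exp 1 with hE
  have hEpos : (0:ℝ) < E := by linarith
  have hεpos : 0 < ε := by
    rw [hε]
    have h : 1/E < 1 := by rw [div_lt_one hEpos]; linarith
    nlinarith
  have hεle : ε ≤ 0.08 * η := by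
    rw [hε]
    have h : (0.36:ℝ) ≤ 1/E := by rw [le_div_iff₀ hEpos]; nlinarith
    nlinarith
  have hε08 : ε < 0.08 := by nlinarith
  set x := (1-ε)^2 with hx
  have hx1 : x ≤ 1 := by rw [hx]; nlinarith
  have hx0 : (0.84:ℝ) ≤ x := by rw [hx]; nlinarith
  set t := Real.exp (-x) with ht
  have htpos : 0 < t := Real.exp_pos _
  have h1 : (1:ℝ) - 2*ε ≤ Real.exp (-(2*ε)) := by
    have := Real.add_one_le_exp (-(2*ε)); linarith
  have h2 : E * Real.exp (-(2*ε)) * t = Real.exp (1 - 2*ε - x) := by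
    rw [hE, ht, ← Real.exp_add, ← Real.exp_add]; ring_nf
  have h3 : Real.exp (1 - 2*ε - x) ≤ 1 := by
    rw [Real.exp_le_one_iff, hx]; nlinarith
  have hEdt : E * (1 - 2*ε) * t ≤ 1 := by
    have hs : E * (1-2*ε) * t ≤ E * Real.exp (-(2*ε)) * t := by
      nlinarith [mul_nonneg (mul_nonneg hEpos.le htpos.le) (sub_nonneg.mpr h1)]
    rw [h2] at hs; linarith
  have hd : (0:ℝ) < 1 - 2*ε := by linarith
  have hEε : E*ε ≤ 0.218*η := by
    nlinarith [mul_nonneg hEpos.le (show (0:ℝ) ≤ 0.08*η - ε by linarith),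
      mul_nonneg hη0.le (show (0:ℝ) ≤ 2.72 - E by linarith)]
  have hEη : 0.27*η ≤ 0.1*(E*η) := by
    nlinarith [mul_nonneg hη0.le (show (0:ℝ) ≤ E - 2.7 by linarith)]
  have hEt : E * t ≤ 1 + 0.1 * E * η := by
    have key : (1:ℝ) ≤ (1 + 0.1*E*η) * (1 - 2*ε) := by
      nlinarith [hEη, mul_nonneg hη0.le (show (0:ℝ) ≤ 0.218*η - E*ε by linarith),
        mul_nonneg hη0.le (show (0:ℝ) ≤ 1 - η by linarith)]
    nlinarith
  have ht047 : t ≤ 0.47 := by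
    nlinarith [hEt, mul_nonneg htpos.le (show (0:ℝ) ≤ E - 2.718 by linarith),
      mul_nonneg hη0.le (show (0:ℝ) ≤ 2.72 - E by linarith)]
  have hβ1 : β ≤ 1 := by rw [hβ]; linarith
  have hβpos : (0:ℝ) < β := by rw [hβ]; linarith
  have hβ53 : (0.53:ℝ) ≤ β := by rw [hβ]; linarith
  have hβE : E - 1 - 0.1*E*η ≤ E*β := by rw [hβ]; nlinarith
  have hαpos : (0:ℝ) < α := by linarith
  have hxpos : (0:ℝ) < x := by linarith
  have hcx : 2 / (c*x) = η / (4*x) := by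
    rw [hc]; field_simp; ring
  have hBpos : (0:ℝ) < 1/α + 2/β := by positivity
  have hg : -0.272*η ≤ E*β - (E-1) := by
    nlinarith [hβE, mul_nonneg hη0.le (show (0:ℝ) ≤ 2.72 - E by linarith)]
  have hA2 : (0:ℝ) ≤ 8*E*x*β - 2*E*β*η + 16*E*x*η - 8*x*(E-1) := by
    nlinarith [mul_nonneg hxpos.le (show (0:ℝ) ≤ E*β - (E-1) + 0.272*η by linarith),
      mul_nonneg hη0.le (mul_nonneg hEpos.le (show (0:ℝ) ≤ x - 0.84 by linarith)),
      mul_nonneg hη0.le (mul_nonneg hEpos.le (show (0:ℝ) ≤ 1 - β by linarith)),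
      mul_nonneg hη0.le (show (0:ℝ) ≤ x by linarith),
      mul_nonneg hη0.le (mul_nonneg hEpos.le hxpos.le)]
  have hA1 : (0:ℝ) ≤ η*(8*x*(E-1) + β*(8*E*x - (E-1))) := by
    have : (0:ℝ) ≤ 8*E*x - (E-1) := by nlinarith
    nlinarith [mul_nonneg (le_trans (by norm_num) hβ53) this, mul_nonneg hxpos.le (show (0:ℝ) ≤ E-1 by linarith)]
  have hA0 : (0:ℝ) ≤ 4*x*η*(E-1)*β := by
    have : (0:ℝ) ≤ E - 1 := by linarith
    positivity
  have hden : (0:ℝ) < E - 1 + 2*E*α := by nlinarith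
  have main : (α*(E-1)/(E-1+2*E*α) - η) * (1/α + 2/β) ≤ 1 - η/(4*x) := by
    have h4x : (0:ℝ) < 4*x := by linarith
    have hab : (0:ℝ) < (E-1+2*E*α)*(α*β) := by positivity
    have eL : (α*(E-1)/(E-1+2*E*α) - η) * (1/α + 2/β)
        = ((α*(E-1) - η*(E-1+2*E*α)) * (β+2*α)) / ((E-1+2*E*α)*(α*β)) := by
      rw [eq_div_iff (ne_of_gt hab)]
      field_simp
      rw [mul_sub, mul_div_assoc', mul_div_cancel_left₀ _ (show E - 1 + α * E * 2 ≠ 0 by linarith)]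
    have eR : 1 - η/(4*x) = (4*x - η)/(4*x) := by field_simp
    rw [eL, eR, div_le_div_iff₀ hab h4x]
    have p2 : (0:ℝ) ≤ (8*E*x*β - 2*E*β*η + 16*E*x*η - 8*x*(E-1)) * α^2 :=
      mul_nonneg hA2 (sq_nonneg α)
    have p1 : (0:ℝ) ≤ (η*(8*x*(E-1) + β*(8*E*x - (E-1)))) * α :=
      mul_nonneg hA1 hαpos.le
    linarith [p2, p1, hA0]
  rw [ge_iff_le, show (1:ℝ) - 2 / (c * x) = 1 - η/(4*x) by rw [← hcx], le_div_iff₀ hBpos]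
  exact main
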